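/- Existence of an absolutely continuous invariant measure from a uniformly absolutely continuous sequence: Let φ : M → M be a measurable map on a compact metric space M with a reference measure Leb, and let μ_n = (1/n)Σ_{i=0}^{n-1} φ^i_* Leb. Suppose μ_n = ν_n + η_n where the ν_n are absolutely continuous with densities uniformly bounded by some constant, and ν_n(M) ≥ b > 0 for all large n. If along a subsequence μ_{n_k} → μ, ν_{n_k} → ν, η_{n_k} → η weakly, and μ is φ-invariant, write η = η^{ac} + η^s (Lebesgue decomposition) and assume φ_* preserves both the class of absolutely continuous and the class of singular measures. Then ν + η^{ac} is a nonzero absolutely continuous φ-invariant measure. -/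

import Mathlib

open MeasureTheory Filter Topology
open scoped ENNReal

/-- existence of a nonzero absolutely continuous invariant measure from a
uniformly absolutely continuous part of the Cesàro averages `μ_n = (1/n)Σ φ^i_* Leb`:
if `μ_n = ν_n + η_n` with `ν_n` of density ≤ K and total mass ≥ b > 0, and along a
subsequence `μ_{n_k} → μ`, `ν_{n_k} → ν`, `η_{n_k} → η` weakly with `μ` invariant,
and pushforward by `φ` preserves absolute continuity and singularity, then
`ν + η^{ac}` is a nonzero absolutely continuous `φ`-invariant measure. -/
theorem acim_from_uniformly_ac_sequence
    {M : Type*} [MetricSpace M] [CompactSpace M] [MeasurableSpace M] [BorelSpace M]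
    (Leb : Measure M) [IsFiniteMeasure Leb]
    (φ : M → M) (hφ : Measurable φ)
    (νseq ηseq : ℕ → Measure M) (ρ : ℕ → M → ℝ≥0∞) (K : ℝ≥0∞) (hK : K ≠ ⊤)
    (hν : ∀ m, νseq m = Leb.withDensity (ρ m))
    (hρ : ∀ m x, ρ m x ≤ K)
    (hdecomp : ∀ m : ℕ, ((m : ℝ≥0∞))⁻¹ • (∑ i ∈ Finset.range m, Measure.map (φ^[i]) Leb)
      = νseq m + ηseq m)
    (b : ℝ≥0∞) (hb : 0 < b) (hνb : ∀ᶠ m in atTop, b ≤ νseq m Set.univ)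
    (nk : ℕ → ℕ) (hnk : StrictMono nk)
    (μ ν η : Measure M) [IsFiniteMeasure μ] [IsFiniteMeasure ν] [IsFiniteMeasure η]
    (hμlim : ∀ f : M → ℝ, Continuous f →
      Tendsto (fun k => ∫ x, f x ∂(((nk k : ℝ≥0∞))⁻¹ •
        (∑ i ∈ Finset.range (nk k), Measure.map (φ^[i]) Leb))) atTop (𝓝 (∫ x, f x ∂μ)))
    (hνlim : ∀ f : M → ℝ, Continuous f →
      Tendsto (fun k => ∫ x, f x ∂(νseq (nk k))) atTop (𝓝 (∫ x, f x ∂ν)))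
    (hηlim : ∀ f : M → ℝ, Continuous f →
      Tendsto (fun k => ∫ x, f x ∂(ηseq (nk k))) atTop (𝓝 (∫ x, f x ∂η)))
    (hinv : Measure.map φ μ = μ)
    (hμdecomp : μ = ν + η)
    (hac : ∀ ρ' : Measure M, ρ' ≪ Leb → Measure.map φ ρ' ≪ Leb)
    (hsing : ∀ ρ' : Measure M, ρ'.MutuallySingular Leb →
      (Measure.map φ ρ').MutuallySingular Leb) :
    ν + Leb.withDensity (η.rnDeriv Leb) ≠ 0 ∧
    (ν + Leb.withDensity (η.rnDeriv Leb)) ≪ Leb ∧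
    Measure.map φ (ν + Leb.withDensity (η.rnDeriv Leb))
      = ν + Leb.withDensity (η.rnDeriv Leb) := by
  -- νseq m is a finite measure
  have hfin : ∀ m, IsFiniteMeasure (νseq m) := by
    intro m
    rw [hν m]
    have hle : ∫⁻ a, ρ m a ∂Leb ≤ K * Leb Set.univ := by
      calc ∫⁻ a, ρ m a ∂Leb ≤ ∫⁻ _, K ∂Leb := lintegral_mono (hρ m)
        _ = K * Leb Set.univ := lintegral_const K
    exact isFiniteMeasure_withDensity
      (ne_top_of_le_ne_top (ENNReal.mul_ne_top hK (measure_ne_top _ _)) hle)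
  -- bound νseq m s ≤ K * Leb s for measurable s
  have hbound : ∀ m s, MeasurableSet s → νseq m s ≤ K * Leb s := by
    intro m s hs
    rw [hν m, withDensity_apply _ hs]
    calc ∫⁻ x in s, ρ m x ∂Leb ≤ ∫⁻ _ in s, K ∂Leb := lintegral_mono (fun x => hρ m x)
      _ = K * Leb s := by rw [setLIntegral_const]
  -- weak convergence as finite measures
  let νF : FiniteMeasure M := ⟨ν, inferInstance⟩
  let νks : ℕ → FiniteMeasure M := fun k => ⟨νseq (nk k), hfin _⟩
  have hweak : Tendsto νks atTop (𝓝 νF) := by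
    apply FiniteMeasure.tendsto_of_forall_integral_tendsto
    intro f
    exact hνlim f f.continuous
  have hclosed : ∀ F : Set M, IsClosed F →
      (atTop.limsup fun k => νseq (nk k) F) ≤ ν F := fun F hF =>
    FiniteMeasure.limsup_measure_closed_le_of_tendsto hweak hF
  -- mass convergence
  have hmass : Tendsto (fun k => νseq (nk k) Set.univ) atTop (𝓝 (ν Set.univ)) := by
    have h1 := (FiniteMeasure.continuous_mass.tendsto νF).comp hweak
    have h2 := ENNReal.tendsto_coe.mpr h1
    simp [FiniteMeasure.ennreal_mass] at h2
    exact h2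
  -- open set bound
  have hopen : ∀ U : Set M, IsOpen U → ν U ≤ K * Leb U := by
    intro U hU
    have key : ν Set.univ ≤ K * Leb U + ν Uᶜ := by
      refine ENNReal.le_of_forall_pos_le_add (fun ε hε hfin' => ?_)
      have hlt : (atTop.limsup fun k => νseq (nk k) Uᶜ) < ν Uᶜ + ε :=
        lt_of_le_of_lt (hclosed Uᶜ (isClosed_compl_iff.mpr hU))
          (ENNReal.lt_add_right (measure_ne_top _ _) (by exact_mod_cast hε.ne'))
      have hev : ∀ᶠ k in atTop, νseq (nk k) Uᶜ < ν Uᶜ + ε :=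
        eventually_lt_of_limsup_lt hlt
      refine le_of_tendsto hmass (hev.mono fun k hk => ?_)
      calc νseq (nk k) Set.univ = νseq (nk k) U + νseq (nk k) Uᶜ :=
            (measure_add_measure_compl hU.measurableSet).symm
        _ ≤ K * Leb U + (ν Uᶜ + ε) :=
            add_le_add (hbound _ _ hU.measurableSet) hk.le
        _ = K * Leb U + ν Uᶜ + ε := by ring
    have hsplit : ν U + ν Uᶜ = ν Set.univ := measure_add_measure_compl hU.measurableSet
    rw [← hsplit] at key
    exact (ENNReal.add_le_add_iff_right (measure_ne_top ν Uᶜ)).mp key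
  -- ν ≪ Leb
  have hνac : ν ≪ Leb := by
    intro s hs
    refine le_antisymm ?_ zero_le
    refine ENNReal.le_of_forall_pos_le_add (fun ε hε _ => ?_)
    rw [zero_add]
    rcases eq_or_ne K 0 with hK0 | hK0
    · obtain ⟨U, hsU, hUopen, _⟩ := Set.exists_isOpen_lt_of_lt s 1 (by rw [hs]; exact zero_lt_one)
      have h := (measure_mono hsU).trans (hopen U hUopen)
      rw [hK0, zero_mul] at h
      exact h.trans zero_le
    · have hδ : (0:ℝ≥0∞) < (ε : ℝ≥0∞) / K :=
        ENNReal.div_pos (by exact_mod_cast hε.ne') hK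
      obtain ⟨U, hsU, hUopen, hULeb⟩ := Set.exists_isOpen_lt_of_lt s _ (hs ▸ hδ)
      calc ν s ≤ ν U := measure_mono hsU
        _ ≤ K * Leb U := hopen U hUopen
        _ ≤ K * ((ε:ℝ≥0∞) / K) := mul_le_mul_right hULeb.le K
        _ ≤ ε := ENNReal.mul_div_le
  -- the candidate measure
  set A := ν + Leb.withDensity (η.rnDeriv Leb) with hA
  have hAac : A ≪ Leb :=
    Measure.AbsolutelyContinuous.add_left_iff.mpr
      ⟨hνac, withDensity_absolutelyContinuous _ _⟩
  -- μ = singular part of η + A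
  have hμA : μ = η.singularPart Leb + A := by
    rw [hμdecomp]
    conv_lhs => rw [← η.singularPart_add_rnDeriv Leb]
    rw [hA, add_left_comm]
  -- A = withDensity of its own rnDeriv
  have hAwd : Leb.withDensity (A.rnDeriv Leb) = A :=
    Measure.withDensity_rnDeriv_eq A Leb hAac
  have h1 : Leb.withDensity (A.rnDeriv Leb) = Leb.withDensity (μ.rnDeriv Leb) :=
    Measure.eq_withDensity_rnDeriv (Measure.measurable_rnDeriv A Leb)
      (Measure.mutuallySingular_singularPart η Leb) (by rw [hμA, hAwd])
  -- the pushforward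
  have hBac : Measure.map φ A ≪ Leb := hac A hAac
  have hBwd : Leb.withDensity ((Measure.map φ A).rnDeriv Leb) = Measure.map φ A :=
    Measure.withDensity_rnDeriv_eq _ Leb hBac
  have hμB : μ = Measure.map φ (η.singularPart Leb) + Measure.map φ A := by
    conv_lhs => rw [← hinv, hμA]
    rw [Measure.map_add _ _ hφ]
  have h2 : Leb.withDensity ((Measure.map φ A).rnDeriv Leb)
      = Leb.withDensity (μ.rnDeriv Leb) :=
    Measure.eq_withDensity_rnDeriv (Measure.measurable_rnDeriv _ Leb)
      (hsing _ (Measure.mutuallySingular_singularPart η Leb)) (by rw [hμB, hBwd])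
  have hinvA : Measure.map φ A = A := by
    rw [← hBwd, h2, ← h1, hAwd]
  -- nonzero
  have hν0 : b ≤ ν Set.univ := by
    refine ge_of_tendsto hmass ?_
    exact hnk.tendsto_atTop.eventually hνb
  refine ⟨?_, hAac, hinvA⟩
  intro h0
  have : ν Set.univ = 0 := by
    have : A Set.univ = 0 := by rw [h0]; rfl
    rw [hA, Measure.add_apply] at this
    exact (add_eq_zero.mp this).1
  rw [this] at hν0
  exact hb.not_ge hν0
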